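/- Let X be a σ_{C(X)}-β-defavorable space, K a space such that K × K is pseudocompact, and f : X × K → ℝ a separately continuous map. Suppose that every pseudocompact subspace of C_p(X) is relatively countably compact in C_p(X). Then there is a dense Gδ subset R of X such that f is jointly continuous at each point of R × K. -/

import Mathlib

open Set Topology Filter

namespace SepJoint

/-- The list `[f 0, …, f (n-1)]` of the first `n` values of a sequence. -/
def hist {A : Type*} (f : ℕ → A) (n : ℕ) : List A := List.ofFn (fun i : Fin n => f i)

variable (X : Type*) [TopologicalSpace X]

/-- A strategy for player β in games of type `𝒥` (with points): from the list of α's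
previous moves `(Uᵢ, aᵢ)`, produce β's next open set `Vₙ`. -/
abbrev BetaStrategy := List (Set X × X) → Set X

/-- A strategy for player α in games of type `𝒥`: from the list `[V₀, …, Vₙ]` of β's moves
(the last being the one to respond to), produce α's move `(Uₙ, aₙ)`. -/
abbrev AlphaStrategy := List (Set X) → Set X × X

/-- A strategy for player β in games of type `𝒥*`: from the list of α's previous
moves `Uᵢ`, produce β's next open set `Vₙ`. -/
abbrev BetaStrategyStar := List (Set X) → Set X

/-- A strategy for player α in games of type `𝒥*`. -/
abbrev AlphaStrategyStar := List (Set X) → Set X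

variable {X}

/-! ### Games of type `𝒥` (α plays pairs `(Uₙ, aₙ)`) -/

/-- α has played legally against the β-strategy `σ` at all stages `< n`:
each `Uᵢ` is a nonempty open subset of β's move `Vᵢ = σ(history)`. -/
def AlphaLegal (σ : BetaStrategy X) (U : ℕ → Set X) (a : ℕ → X) (n : ℕ) : Prop :=
  ∀ i < n, IsOpen (U i) ∧ (U i).Nonempty ∧ U i ⊆ σ (hist (fun j => (U j, a j)) i)

/-- `σ` is a legal strategy for β: against any legal finite history it produces a nonempty
open set contained in α's previous move. -/
def BetaLegal (σ : BetaStrategy X) : Prop :=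
  ∀ (U : ℕ → Set X) (a : ℕ → X) (n : ℕ), AlphaLegal σ U a n →
    IsOpen (σ (hist (fun j => (U j, a j)) n)) ∧
    (σ (hist (fun j => (U j, a j)) n)).Nonempty ∧
    ∀ m, n = m + 1 → σ (hist (fun j => (U j, a j)) n) ⊆ U m

/-- The winning condition for α in the game `𝒥_Γ` on the play with moves `(Uₙ, aₙ)`:
for each `g ∈ Γ` there is `t ∈ ⋂ₙ Uₙ` with `g t` in the closure of `{g (aₙ) : n}`. -/
def AlphaWinsGamma (Γ : Set (X → ℝ)) (U : ℕ → Set X) (a : ℕ → X) : Prop :=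
  ∀ g ∈ Γ, ∃ t ∈ (⋂ n, U n), g t ∈ closure (Set.range fun n => g (a n))

/-- The winning condition for α in the game `𝒥` on the play with moves `(Uₙ, aₙ)`:
`(⋂ₙ Uₙ) ∩ closure {aₙ : n} ≠ ∅`. -/
def AlphaWinsPlain (U : ℕ → Set X) (a : ℕ → X) : Prop :=
  ((⋂ n, U n) ∩ closure (Set.range a)).Nonempty

/-- `σ` is a winning strategy for β in the game `𝒥_Γ`. -/
def BetaWinningGamma (Γ : Set (X → ℝ)) (σ : BetaStrategy X) : Prop :=
  BetaLegal σ ∧ ∀ U a, (∀ n, AlphaLegal σ U a n) → ¬ AlphaWinsGamma Γ U a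

/-- `σ` is a winning strategy for β in the game `𝒥`. -/
def BetaWinningPlain (σ : BetaStrategy X) : Prop :=
  BetaLegal σ ∧ ∀ U a, (∀ n, AlphaLegal σ U a n) → ¬ AlphaWinsPlain U a

/-- `X` is σ_Γ-β-defavorable: β has no winning strategy in the game `𝒥_Γ`. -/
def SigmaGammaBetaDefavorable (X : Type*) [TopologicalSpace X] (Γ : Set (X → ℝ)) : Prop :=
  ¬ ∃ σ : BetaStrategy X, BetaWinningGamma Γ σ

/-- `X` is σ-β-defavorable: β has no winning strategy in the game `𝒥`. -/
def SigmaBetaDefavorable (X : Type*) [TopologicalSpace X] : Prop :=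
  ¬ ∃ σ : BetaStrategy X, BetaWinningPlain σ

/-- Given the α-strategy `τ` and β's moves `V`, α's `n`-th move `(Uₙ, aₙ) = τ [V₀, …, Vₙ]`. -/
def alphaMove (τ : AlphaStrategy X) (V : ℕ → Set X) (n : ℕ) : Set X × X :=
  τ (hist V (n + 1))

/-- `τ` is a legal strategy for α: along any legal history of β-moves it answers with a
nonempty open subset of β's last move. -/
def AlphaStratLegal (τ : AlphaStrategy X) : Prop :=
  ∀ (V : ℕ → Set X) (n : ℕ), (IsOpen (V 0) ∧ (V 0).Nonempty) →
    (∀ i < n, IsOpen (V (i + 1)) ∧ (V (i + 1)).Nonempty ∧ V (i + 1) ⊆ (alphaMove τ V i).1) →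
    IsOpen (alphaMove τ V n).1 ∧ (alphaMove τ V n).1.Nonempty ∧ (alphaMove τ V n).1 ⊆ V n

/-- `V` is a full run of legal moves of β against the α-strategy `τ`. -/
def BetaLegalRun (τ : AlphaStrategy X) (V : ℕ → Set X) : Prop :=
  IsOpen (V 0) ∧ (V 0).Nonempty ∧
    ∀ n, IsOpen (V (n + 1)) ∧ (V (n + 1)).Nonempty ∧ V (n + 1) ⊆ (alphaMove τ V n).1

/-- `τ` is a conditionally winning strategy for α in the game `𝒥_Γ`: every compatible play
with `⋂ₙ Uₙ ≠ ∅` fulfils the winning condition for α. -/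
def CondAlphaWinningGamma (Γ : Set (X → ℝ)) (τ : AlphaStrategy X) : Prop :=
  AlphaStratLegal τ ∧
    ∀ V, BetaLegalRun τ V → (⋂ n, (alphaMove τ V n).1).Nonempty →
      AlphaWinsGamma Γ (fun n => (alphaMove τ V n).1) (fun n => (alphaMove τ V n).2)

/-- `X` is conditionally σ_Γ-α-favorable. -/
def CondSigmaGammaAlphaFavorable (X : Type*) [TopologicalSpace X] (Γ : Set (X → ℝ)) : Prop :=
  ∃ τ : AlphaStrategy X, CondAlphaWinningGamma Γ τ

/-- `τ` is a conditionally winning strategy for α in the game `𝒥`. -/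
def CondAlphaWinningPlain (τ : AlphaStrategy X) : Prop :=
  AlphaStratLegal τ ∧
    ∀ V, BetaLegalRun τ V → (⋂ n, (alphaMove τ V n).1).Nonempty →
      AlphaWinsPlain (fun n => (alphaMove τ V n).1) (fun n => (alphaMove τ V n).2)

/-- `X` is conditionally σ-α-favorable. -/
def CondSigmaAlphaFavorable (X : Type*) [TopologicalSpace X] : Prop :=
  ∃ τ : AlphaStrategy X, CondAlphaWinningPlain τ

/-! ### Games of type `𝒥*` (α plays only open sets) -/

/-- α has played legally against the β-strategy `σ` in `𝒥*` at all stages `< n`. -/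
def AlphaLegalStar (σ : BetaStrategyStar X) (U : ℕ → Set X) (n : ℕ) : Prop :=
  ∀ i < n, IsOpen (U i) ∧ (U i).Nonempty ∧ U i ⊆ σ (hist U i)

/-- `σ` is a legal strategy for β in `𝒥*`. -/
def BetaLegalStar (σ : BetaStrategyStar X) : Prop :=
  ∀ (U : ℕ → Set X) (n : ℕ), AlphaLegalStar σ U n →
    IsOpen (σ (hist U n)) ∧ (σ (hist U n)).Nonempty ∧ ∀ m, n = m + 1 → σ (hist U n) ⊆ U m

/-- The winning condition for α in the game `𝒥*_Γ` on the play with α-moves `Uₙ`: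
for every sequence `(aₙ)` with `aₙ ∈ Uₙ` and every `g ∈ Γ`, there is `t ∈ ⋂ₙ Uₙ` with
`g t` in the closure of `{g (aₙ) : n}`. -/
def AlphaWinsStar (Γ : Set (X → ℝ)) (U : ℕ → Set X) : Prop :=
  ∀ a : ℕ → X, (∀ n, a n ∈ U n) → ∀ g ∈ Γ,
    ∃ t ∈ (⋂ n, U n), g t ∈ closure (Set.range fun n => g (a n))

/-- `σ` is a winning strategy for β in the game `𝒥*_Γ`. -/
def BetaWinningStar (Γ : Set (X → ℝ)) (σ : BetaStrategyStar X) : Prop :=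
  BetaLegalStar σ ∧ ∀ U, (∀ n, AlphaLegalStar σ U n) → ¬ AlphaWinsStar Γ U

/-- `X` is σ*_Γ-β-defavorable: β has no winning strategy in `𝒥*_Γ`. -/
def SigmaStarBetaDefavorable (X : Type*) [TopologicalSpace X] (Γ : Set (X → ℝ)) : Prop :=
  ¬ ∃ σ : BetaStrategyStar X, BetaWinningStar Γ σ

/-- Given the α-strategy `τ` and β's moves `V`, α's `n`-th move `Uₙ = τ [V₀, …, Vₙ]` in `𝒥*`. -/
def alphaMoveStar (τ : AlphaStrategyStar X) (V : ℕ → Set X) (n : ℕ) : Set X :=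
  τ (hist V (n + 1))

/-- `τ` is a legal strategy for α in `𝒥*`. -/
def AlphaStratLegalStar (τ : AlphaStrategyStar X) : Prop :=
  ∀ (V : ℕ → Set X) (n : ℕ), (IsOpen (V 0) ∧ (V 0).Nonempty) →
    (∀ i < n, IsOpen (V (i + 1)) ∧ (V (i + 1)).Nonempty ∧ V (i + 1) ⊆ alphaMoveStar τ V i) →
    IsOpen (alphaMoveStar τ V n) ∧ (alphaMoveStar τ V n).Nonempty ∧ alphaMoveStar τ V n ⊆ V n

/-- `V` is a full run of legal moves of β against the α-strategy `τ` in `𝒥*`. -/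
def BetaLegalRunStar (τ : AlphaStrategyStar X) (V : ℕ → Set X) : Prop :=
  IsOpen (V 0) ∧ (V 0).Nonempty ∧
    ∀ n, IsOpen (V (n + 1)) ∧ (V (n + 1)).Nonempty ∧ V (n + 1) ⊆ alphaMoveStar τ V n

/-- `τ` is a winning strategy for α in the game `𝒥*_Γ`. -/
def AlphaWinningStar (Γ : Set (X → ℝ)) (τ : AlphaStrategyStar X) : Prop :=
  AlphaStratLegalStar τ ∧
    ∀ V, BetaLegalRunStar τ V → AlphaWinsStar Γ (fun n => alphaMoveStar τ V n)

/-- `τ` is a conditionally winning strategy for α in the game `𝒥*_Γ`. -/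
def CondAlphaWinningStar (Γ : Set (X → ℝ)) (τ : AlphaStrategyStar X) : Prop :=
  AlphaStratLegalStar τ ∧
    ∀ V, BetaLegalRunStar τ V → (⋂ n, alphaMoveStar τ V n).Nonempty →
      AlphaWinsStar Γ (fun n => alphaMoveStar τ V n)

/-- `X` is σ*_Γ-α-favorable. -/
def SigmaStarAlphaFavorable (X : Type*) [TopologicalSpace X] (Γ : Set (X → ℝ)) : Prop :=
  ∃ τ : AlphaStrategyStar X, AlphaWinningStar Γ τ

/-- `X` is conditionally σ*_Γ-α-favorable. -/
def CondSigmaStarAlphaFavorable (X : Type*) [TopologicalSpace X] (Γ : Set (X → ℝ)) : Prop :=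
  ∃ τ : AlphaStrategyStar X, CondAlphaWinningStar Γ τ

/-! ### Auxiliary notions -/

/-- `f : X × K → ℝ` is separately continuous. -/
def SeparatelyContinuous {K : Type*} [TopologicalSpace K] (f : X × K → ℝ) : Prop :=
  (∀ x, Continuous fun y => f (x, y)) ∧ (∀ y, Continuous fun x => f (x, y))

/-- The map `φ : K → ℝ^X`, `φ(y)(x) = f(x, y)`. -/
def phi {X K : Type*} (f : X × K → ℝ) (y : K) : X → ℝ := fun x => f (x, y)

/-- A sequence `(Wₙ)` of subsets of `K` is countably pair complete with respect to `(φ, Γ)`: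
for all sequences `yₙ, zₙ ∈ Wₙ`, the sequence `φ(yₙ) - φ(zₙ)` has a cluster point in `Γ`
(`ℝ^X` carrying the product, i.e. pointwise convergence, topology). -/
def PairComplete {K : Type*} (f : X × K → ℝ) (Γ : Set (X → ℝ)) (W : ℕ → Set K) : Prop :=
  ∀ y z : ℕ → K, (∀ n, y n ∈ W n) → (∀ n, z n ∈ W n) →
    ∃ g ∈ Γ, MapClusterPt g atTop (fun n => phi f (y n) - phi f (z n))

/-- `f` is ε-continuous at `p`. -/
def EpsCont {K : Type*} [TopologicalSpace K] (f : X × K → ℝ) (ε : ℝ) (p : X × K) : Prop :=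
  ∃ O ∈ 𝓝 p, ∀ q ∈ O, |f p - f q| < ε

/-- `Y` is a bounded subset of `Z`: every continuous real-valued function on `Z`
is bounded on `Y`. -/
def BoundedIn {Z : Type*} [TopologicalSpace Z] (Y : Set Z) : Prop :=
  ∀ g : Z → ℝ, Continuous g → ∃ M, ∀ y ∈ Y, |g y| ≤ M

/-- `Y` is relatively countably compact in `Z`: every sequence in `Y` has a cluster
point in `Z`. -/
def RelCountablyCompact {Z : Type*} [TopologicalSpace Z] (Y : Set Z) : Prop :=
  ∀ u : ℕ → Z, (∀ n, u n ∈ Y) → ∃ z : Z, MapClusterPt z atTop u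

/-- `K` is pseudocompact: Tychonoff and every continuous real-valued function is bounded. -/
def Pseudocompact (K : Type*) [TopologicalSpace K] : Prop :=
  T35Space K ∧ BoundedIn (Set.univ : Set K)

/-- `Y` is Čech-complete: Tychonoff, and there is a sequence of open covers of `Y` which is
complete: any filter base of nonempty closed sets, containing for each `n` a set included
in a member of the `n`-th cover, has nonempty intersection. -/
def CechComplete (Y : Type*) [TopologicalSpace Y] : Prop :=
  T35Space Y ∧ ∃ 𝒰 : ℕ → Set (Set Y),
    (∀ n, ∀ U ∈ 𝒰 n, IsOpen U) ∧ (∀ n, ⋃₀ 𝒰 n = Set.univ) ∧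
    ∀ ℱ : Set (Set Y),
      (∀ F ∈ ℱ, IsClosed F) → ℱ.Nonempty → (∀ F ∈ ℱ, F.Nonempty) →
      (∀ F₁ ∈ ℱ, ∀ F₂ ∈ ℱ, ∃ F₃ ∈ ℱ, F₃ ⊆ F₁ ∩ F₂) →
      (∀ n, ∃ F ∈ ℱ, ∃ U ∈ 𝒰 n, F ⊆ U) →
      (⋂₀ ℱ).Nonempty

/-- `Y` is a p-space: Tychonoff, and there is a sequence `(𝒰ₙ)` of open covers of `Y` such
that each `x ∈ Y` has a sequence `Uₙ ∈ 𝒰ₙ` of members containing it whose intersection is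
compact and for which `(⋂_{i ≤ n} Uᵢ)ₙ` is an outer base of `⋂ₙ Uₙ`. -/
def PSpace (Y : Type*) [TopologicalSpace Y] : Prop :=
  T35Space Y ∧ ∃ 𝒰 : ℕ → Set (Set Y),
    (∀ n, ∀ U ∈ 𝒰 n, IsOpen U) ∧ (∀ n, ⋃₀ 𝒰 n = Set.univ) ∧
    ∀ x : Y, ∃ U : ℕ → Set Y, (∀ n, U n ∈ 𝒰 n) ∧ (∀ n, x ∈ U n) ∧
      IsCompact (⋂ n, U n) ∧
      ∀ W : Set Y, IsOpen W → (⋂ n, U n) ⊆ W → ∃ m, (⋂ i ≤ m, U i) ⊆ W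

/-- `X` is a Namioka space: for every compact Hausdorff `K`, every separately continuous
`f : X × K → ℝ` is jointly continuous at each point of `R × K` for some dense `R ⊆ X`. -/
def NamiokaSpace (X : Type*) [TopologicalSpace X] : Prop :=
  ∀ (K : Type*) [TopologicalSpace K], CompactSpace K → T2Space K →
    ∀ f : X × K → ℝ, SeparatelyContinuous f →
      ∃ R : Set X, Dense R ∧ ∀ x ∈ R, ∀ y : K, ContinuousAt f (x, y)

/-- `A` is C-embedded in `Y`: every continuous real-valued function on `A` extends
continuously to `Y`. -/
def CEmbedded {Y : Type*} [TopologicalSpace Y] (A : Set Y) : Prop :=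
  ∀ g : A → ℝ, Continuous g → ∃ G : Y → ℝ, Continuous G ∧ ∀ a : A, G a = g a

/-- `A` is C*-embedded in `Y`: every bounded continuous real-valued function on `A`
extends continuously to `Y`. -/
def CStarEmbedded {Y : Type*} [TopologicalSpace Y] (A : Set Y) : Prop :=
  ∀ g : A → ℝ, Continuous g → (∃ M, ∀ a, |g a| ≤ M) →
    ∃ G : Y → ℝ, Continuous G ∧ ∀ a : A, G a = g a

/-- The family `F ⊆ ℝ^X` is equicontinuous at `x`. -/
def EquicontAt (F : Set (X → ℝ)) (x : X) : Prop :=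
  ∀ ε > 0, ∃ U ∈ 𝓝 x, ∀ y ∈ U, ∀ g ∈ F, |g x - g y| < ε

end SepJoint

/-! ### Auxiliary material for the proof -/

section AuxProof

open SepJoint

/-- A space embedding into a power of `ℝ` is Tychonoff. -/
theorem aux_t35 {Z ι : Type*} [TopologicalSpace Z] (e : Z → ι → ℝ)
    (he : Topology.IsInducing e) (hinj : Function.Injective e) : T35Space Z := by
  have hemb : Topology.IsEmbedding e := ⟨he, hinj⟩
  haveI : T2Space Z := hemb.t2Space
  refine { toT0Space := inferInstance, toCompletelyRegularSpace := ⟨fun x C hC hx => ?_⟩ }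
  obtain ⟨W, hWo, hWeq⟩ := he.isOpen_iff.mp hC.isOpen_compl
  have hxW : e x ∈ W := by
    have hxc : x ∈ Cᶜ := hx
    rw [← hWeq] at hxc; exact hxc
  obtain ⟨s, u, hu, hpi⟩ := isOpen_pi_iff.mp hWo (e x) hxW
  have hball : ∀ i : ι, ∃ r : ℝ, 0 < r ∧ (i ∈ s → Metric.ball (e x i) r ⊆ u i) := by
    intro i
    by_cases hi : i ∈ s
    · obtain ⟨r, hr, hsub⟩ := Metric.isOpen_iff.mp (hu i hi).1 _ (hu i hi).2
      exact ⟨r, hr, fun _ => hsub⟩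
    · exact ⟨1, one_pos, fun h => absurd h hi⟩
  choose r hr hrsub using hball
  have hgc : Continuous (fun z => ∑ i ∈ s, min 1 (|e z i - e x i| / r i) : Z → ℝ) := by
    refine continuous_finset_sum _ fun i _ => continuous_const.min ?_
    exact (((continuous_apply i).comp he.continuous).sub continuous_const).abs.div_const _
  have hgx : (∑ i ∈ s, min 1 (|e x i - e x i| / r i)) = 0 := by
    refine Finset.sum_eq_zero fun i _ => ?_
    rw [sub_self, abs_zero, zero_div]
    exact min_eq_right zero_le_one
  have hgC : ∀ z ∈ C, (1:ℝ) ≤ ∑ i ∈ s, min 1 (|e z i - e x i| / r i) := by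
    intro z hz
    have hzW : e z ∉ W := by
      intro h
      have hzc : z ∈ Cᶜ := by rw [← hWeq]; exact h
      exact hzc hz
    have hzpi : e z ∉ (s : Set ι).pi u := fun h => hzW (hpi h)
    rw [Set.mem_pi] at hzpi
    push_neg at hzpi
    obtain ⟨i, his, hiu⟩ := hzpi
    have hri : r i ≤ |e z i - e x i| := by
      by_contra hlt
      push_neg at hlt
      exact hiu (hrsub i his (by rw [Metric.mem_ball, Real.dist_eq]; exact hlt))
    have hterm : min (1:ℝ) (|e z i - e x i| / r i) = 1 :=
      min_eq_left ((one_le_div (hr i)).mpr hri)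
    calc (1:ℝ) = min 1 (|e z i - e x i| / r i) := hterm.symm
    _ ≤ ∑ j ∈ s, min 1 (|e z j - e x j| / r j) :=
        Finset.single_le_sum (f := fun j => min 1 (|e z j - e x j| / r j))
          (fun j _ => le_min zero_le_one
            (div_nonneg (abs_nonneg _) (hr j).le)) his
  refine ⟨fun z => Set.projIcc 0 1 zero_le_one (∑ i ∈ s, min 1 (|e z i - e x i| / r i)),
    continuous_projIcc.comp hgc, ?_, ?_⟩
  · show Set.projIcc 0 1 zero_le_one (∑ i ∈ s, min 1 (|e x i - e x i| / r i)) = 0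
    rw [hgx]
    exact Subtype.ext (by simp [Set.projIcc_left])
  · intro z hz
    show Set.projIcc 0 1 zero_le_one (∑ i ∈ s, min 1 (|e z i - e x i| / r i)) = 1
    rw [Set.projIcc_of_right_le _ (hgC z hz)]
    rfl

variable {X K : Type*} [TopologicalSpace X] [TopologicalSpace K]

/-- The set of points `x` having a neighborhood on which `f` oscillates (in the first
variable, uniformly in the second) by at most `ε`. -/
def Wset (f : X × K → ℝ) (ε : ℝ) : Set X :=
  {x | ∃ U, IsOpen U ∧ x ∈ U ∧ ∀ x₁ ∈ U, ∀ x₂ ∈ U, ∀ y, |f (x₁, y) - f (x₂, y)| ≤ ε}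

theorem Wset_isOpen (f : X × K → ℝ) (ε : ℝ) : IsOpen (Wset f ε) := by
  rw [isOpen_iff_forall_mem_open]
  rintro x ⟨U, hUo, hxU, hU⟩
  exact ⟨U, fun x' hx' => ⟨U, hUo, hx', hU⟩, hUo, hxU⟩

theorem hist_zero {A : Type*} (g : ℕ → A) : hist g 0 = [] := by simp [hist]

theorem hist_succ {A : Type*} (g : ℕ → A) (n : ℕ) :
    hist g (n + 1) = (hist g n).concat (g n) := by
  simp only [hist]
  rw [List.ofFn_succ']
  simp

theorem hist_ne_nil {A : Type*} (g : ℕ → A) (n : ℕ) : hist g (n + 1) ≠ [] := by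
  simp [hist]

theorem length_hist {A : Type*} (g : ℕ → A) (n : ℕ) : (hist g n).length = n := by
  simp [hist]

theorem mem_hist {A : Type*} (g : ℕ → A) {i n : ℕ} (h : i < n) : g i ∈ hist g n :=
  List.mem_ofFn.mpr ⟨⟨i, h⟩, rfl⟩

/-- The first component of the last element of a history (`∅` for the empty history). -/
def lastSet {X : Type*} (L : List (Set X × X)) : Set X := L.foldl (fun _ p => p.1) ∅

theorem lastSet_hist {X : Type*} (g : ℕ → Set X × X) (n : ℕ) :
    lastSet (hist g (n + 1)) = (g n).1 := by
  rw [hist_succ]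
  simp [lastSet, List.foldl_concat]

/-- Every continuous real function on `K` is bounded when `K × K` is pseudocompact. -/
theorem bounded_of_KK (hKK : Pseudocompact (K × K)) (g : K → ℝ) (hg : Continuous g) :
    ∃ M, ∀ y : K, |g y| ≤ M := by
  obtain ⟨M, hM⟩ := hKK.2 (fun w : K × K => g w.1) (hg.comp continuous_fst)
  exact ⟨M, fun y => hM (y, y) trivial⟩

/-- Key step: in an open set disjoint from `Wset f ε` one can find a pair `y, z ∈ K`
whose difference function is uniformly large on a smaller open set while being
`δ`-small at the finitely many points of `A`. -/
theorem step_lemma {f : X × K → ℝ} (hf : SeparatelyContinuous f)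
    (hKK : Pseudocompact (K × K)) {ε δ : ℝ} (hε : 0 < ε) (hδ : 0 < δ)
    {U : Set X} (hUo : IsOpen U) (hUne : U.Nonempty) (hdisj : U ∩ Wset f ε = ∅)
    (A : List X) :
    ∃ V : Set X, ∃ y z : K, IsOpen V ∧ V.Nonempty ∧ V ⊆ U ∧
      (∀ x ∈ V, ε / 3 ≤ |f (x, y) - f (x, z)|) ∧
      ∀ b ∈ A, |f (b, y) - f (b, z)| ≤ δ := by
  classical
  obtain ⟨x₀, hx₀⟩ := hUne
  have hx₀W : x₀ ∉ Wset f ε := by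
    intro h
    have hmem : x₀ ∈ U ∩ Wset f ε := ⟨hx₀, h⟩
    rw [hdisj] at hmem
    exact hmem
  have key : ∀ U' : Set X, IsOpen U' → x₀ ∈ U' →
      ∃ x₁ ∈ U', ∃ x₂ ∈ U', ∃ yy : K, ε < |f (x₁, yy) - f (x₂, yy)| := by
    intro U' ho hm
    by_contra hcon
    push_neg at hcon
    exact hx₀W ⟨U', ho, hm, hcon⟩
  have hKne : Nonempty K := by
    obtain ⟨_, _, _, _, yy, _⟩ := key U hUo hx₀
    exact ⟨yy⟩
  -- a finite δ-net in `K` for the evaluation at points of `A`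
  have hbdd : ∀ i : Fin A.length, ∃ M, ∀ yy : K, |f (A.get i, yy)| ≤ M :=
    fun i => bounded_of_KK hKK _ (hf.1 (A.get i))
  choose M hM using hbdd
  have hgS : Set.range (fun yy (i : Fin A.length) => f (A.get i, yy)) ⊆
      Set.pi Set.univ fun i => Set.Icc (-(M i)) (M i) := by
    rintro _ ⟨yy, rfl⟩ i _
    exact abs_le.mp (hM i yy)
  have htb : TotallyBounded (Set.range fun yy (i : Fin A.length) => f (A.get i, yy)) :=
    ((isCompact_univ_pi fun i => isCompact_Icc).totallyBounded).subset hgS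
  obtain ⟨tset, htsub, htfin, htcov⟩ :=
    totallyBounded_iff_subset.mp htb _ (Metric.dist_mem_uniformity hδ)
  have hτex : ∀ v : Fin A.length → ℝ, ∃ t : K,
      v ∈ tset → (fun (i : Fin A.length) => f (A.get i, t)) = v := by
    intro v
    by_cases hv : v ∈ tset
    · obtain ⟨t, ht⟩ := htsub hv
      exact ⟨t, fun _ => ht⟩
    · exact ⟨Classical.arbitrary K, fun h => absurd h hv⟩
  choose τ hτ using hτex
  -- shrink around x₀ using the finitely many functions from the net
  have hU'o : IsOpen (U ∩ ⋂ v ∈ tset, {x | |f (x, τ v) - f (x₀, τ v)| < ε / 8}) := by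
    refine hUo.inter (htfin.isOpen_biInter fun v _ => ?_)
    exact isOpen_lt (((hf.2 (τ v)).sub continuous_const).abs) continuous_const
  have hx₀U' : x₀ ∈ U ∩ ⋂ v ∈ tset, {x | |f (x, τ v) - f (x₀, τ v)| < ε / 8} := by
    refine ⟨hx₀, Set.mem_iInter₂.mpr fun v _ => ?_⟩
    simp only [Set.mem_setOf_eq, sub_self, abs_zero]
    positivity
  obtain ⟨x₁, hx₁, x₂, hx₂, yy, hyy⟩ := key _ hU'o hx₀U'
  -- find the net element close to `yy`
  have hycov := htcov (Set.mem_range_self (f := fun yy (i : Fin A.length) => f (A.get i, yy)) yy)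
  rw [Set.mem_iUnion₂] at hycov
  obtain ⟨v, hv, hdist⟩ := hycov
  have hgt : (fun (i : Fin A.length) => f (A.get i, τ v)) = v := hτ v hv
  have hclose : ∀ b ∈ A, |f (b, yy) - f (b, τ v)| ≤ δ := by
    intro b hb
    obtain ⟨i, hi⟩ := List.mem_iff_get.mp hb
    have hd : dist (fun (i : Fin A.length) => f (A.get i, yy))
        (fun (i : Fin A.length) => f (A.get i, τ v)) < δ := by
      rw [hgt]
      exact hdist
    have := (dist_pi_lt_iff hδ).mp hd i
    rw [Real.dist_eq] at this
    rw [← hi]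
    exact this.le
  -- the difference function is large at x₁ or at x₂
  have hx₁t : |f (x₁, τ v) - f (x₀, τ v)| < ε / 8 := Set.mem_iInter₂.mp hx₁.2 v hv
  have hx₂t : |f (x₂, τ v) - f (x₀, τ v)| < ε / 8 := Set.mem_iInter₂.mp hx₂.2 v hv
  have htri : |f (x₁, τ v) - f (x₂, τ v)| < ε / 4 := by
    have h := abs_sub_le (f (x₁, τ v)) (f (x₀, τ v)) (f (x₂, τ v))
    have h2 : |f (x₀, τ v) - f (x₂, τ v)| = |f (x₂, τ v) - f (x₀, τ v)| := abs_sub_comm _ _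
    linarith
  have hd12 : 3 * ε / 4 < |(f (x₁, yy) - f (x₁, τ v)) - (f (x₂, yy) - f (x₂, τ v))| := by
    have hrw : (f (x₁, yy) - f (x₁, τ v)) - (f (x₂, yy) - f (x₂, τ v)) =
        (f (x₁, yy) - f (x₂, yy)) - (f (x₁, τ v) - f (x₂, τ v)) := by ring
    have h := abs_sub_abs_le_abs_sub (f (x₁, yy) - f (x₂, yy)) (f (x₁, τ v) - f (x₂, τ v))
    rw [hrw]
    linarith
  have hor : ε / 3 < |f (x₁, yy) - f (x₁, τ v)| ∨ ε / 3 < |f (x₂, yy) - f (x₂, τ v)| := by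
    by_contra hcon
    push_neg at hcon
    have h3 : |(f (x₁, yy) - f (x₁, τ v)) - (f (x₂, yy) - f (x₂, τ v))| ≤
        |f (x₁, yy) - f (x₁, τ v)| + |f (x₂, yy) - f (x₂, τ v)| := by
      have h4 := abs_sub_le (f (x₁, yy) - f (x₁, τ v)) 0 (f (x₂, yy) - f (x₂, τ v))
      simpa [abs_sub_comm (f (x₂, τ v))] using h4
    linarith [hcon.1, hcon.2]
  have hVo : IsOpen (U ∩ {x | ε / 3 < |f (x, yy) - f (x, τ v)|}) :=
    hUo.inter (isOpen_lt continuous_const (((hf.2 yy).sub (hf.2 (τ v))).abs))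
  have hVne : (U ∩ {x | ε / 3 < |f (x, yy) - f (x, τ v)|}).Nonempty := by
    rcases hor with h | h
    · exact ⟨x₁, hx₁.1, h⟩
    · exact ⟨x₂, hx₂.1, h⟩
  exact ⟨U ∩ {x | ε / 3 < |f (x, yy) - f (x, τ v)|}, yy, τ v, hVo, hVne,
    Set.inter_subset_left, fun x hx => hx.2.le, hclose⟩

/-- A `σ_{C(X)}`-β-defavorable space is a Baire space. -/
theorem baire_aux (hX : SigmaGammaBetaDefavorable X {g : X → ℝ | Continuous g}) :
    BaireSpace X := by
  classical
  by_contra hB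
  have h1 : ¬ ∀ F : ℕ → Set X, (∀ n, IsOpen (F n)) → (∀ n, Dense (F n)) →
      Dense (⋂ n, F n) := fun h => hB ⟨h⟩
  push_neg at h1
  obtain ⟨F, hFo, hFd, hFnd⟩ := h1
  rw [dense_iff_inter_open] at hFnd
  push_neg at hFnd
  obtain ⟨O, hOo, hOne, hOint⟩ := hFnd
  have hOint' : O ∩ ⋂ n, F n = ∅ := hOint
  obtain ⟨σ, hσnil, hσcons⟩ : ∃ σ : BetaStrategy X, σ [] = O ∧
      ∀ L : List (Set X × X), L ≠ [] → σ L = lastSet L ∩ F (L.length - 1) :=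
    ⟨fun L => if L = [] then O else lastSet L ∩ F (L.length - 1), if_pos rfl,
      fun L hL => if_neg hL⟩
  have claim : ∀ (n : ℕ) (U : ℕ → Set X) (a : ℕ → X), AlphaLegal σ U a n →
      IsOpen (σ (hist (fun j => (U j, a j)) n)) ∧
      (σ (hist (fun j => (U j, a j)) n)).Nonempty ∧
      (∀ m, n = m + 1 → σ (hist (fun j => (U j, a j)) n) ⊆ U m ∩ F m) := by
    intro n U a h
    cases n with
    | zero =>
      rw [hist_zero, hσnil]
      exact ⟨hOo, hOne, fun m hm => by omega⟩
    | succ m =>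
      obtain ⟨hUo, hUne, _⟩ := h m (Nat.lt_succ_self m)
      have heq : σ (hist (fun j => (U j, a j)) (m + 1)) = U m ∩ F m := by
        rw [hσcons _ (hist_ne_nil _ m), lastSet_hist, length_hist]
        rfl
      rw [heq]
      refine ⟨hUo.inter (hFo m), (hFd m).inter_open_nonempty _ hUo hUne, ?_⟩
      intro m' hm'
      have : m' = m := by omega
      subst this
      exact subset_rfl
  refine hX ⟨σ, ⟨?_, ?_⟩⟩
  · intro U a n h
    obtain ⟨ho, hne, hsub⟩ := claim n U a h
    exact ⟨ho, hne, fun m hm => (hsub m hm).trans Set.inter_subset_left⟩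
  · intro U a hleg hw
    obtain ⟨t, ht, -⟩ := hw (fun _ => (0:ℝ)) continuous_const
    have htO : t ∈ O := by
      have h0 := (hleg 1 0 Nat.one_pos).2.2 (Set.mem_iInter.mp ht 0)
      rwa [hist_zero, hσnil] at h0
    have htF : ∀ m, t ∈ F m := by
      intro m
      have h1 := (hleg (m + 2) (m + 1) (Nat.lt_succ_self _)).2.2
        (Set.mem_iInter.mp ht (m + 1))
      exact ((claim (m + 1) U a (hleg (m + 1))).2.2 m rfl h1).2
    have : t ∈ O ∩ ⋂ n, F n := ⟨htO, Set.mem_iInter.mpr htF⟩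
    rw [hOint'] at this
    exact this

/-- Density of `Wset f ε`: the core game argument. -/
theorem Wset_dense (hX : SigmaGammaBetaDefavorable X {g : X → ℝ | Continuous g})
    (hKK : Pseudocompact (K × K))
    (hcc : ∀ Y : Set {g : X → ℝ // Continuous g}, Pseudocompact Y → RelCountablyCompact Y)
    {f : X × K → ℝ} (hf : SeparatelyContinuous f) {ε : ℝ} (hε : 0 < ε) :
    Dense (Wset f ε) := by
  classical
  rcases isEmpty_or_nonempty K with hKe | hKne
  · have : Wset f ε = Set.univ :=
      Set.eq_univ_of_forall fun x =>
        ⟨Set.univ, isOpen_univ, trivial, fun x₁ _ x₂ _ y => (hKe.false y).elim⟩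
    rw [this]
    exact dense_univ
  by_contra hnd
  rw [dense_iff_inter_open] at hnd
  push_neg at hnd
  obtain ⟨V₀, hV₀o, hV₀ne, hV₀int⟩ := hnd
  have hV₀dis : V₀ ∩ Wset f ε = ∅ := hV₀int
  -- the choice function implementing the key step
  have hstep : ∀ L : List (Set X × X), ∃ V : Set X, ∃ y z : K,
      (IsOpen (lastSet L) ∧ (lastSet L).Nonempty ∧ lastSet L ∩ Wset f ε = ∅) →
      IsOpen V ∧ V.Nonempty ∧ V ⊆ lastSet L ∧
        (∀ x ∈ V, ε / 3 ≤ |f (x, y) - f (x, z)|) ∧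
        ∀ b ∈ L.map Prod.snd, |f (b, y) - f (b, z)| ≤ (1/2 : ℝ) ^ L.length := by
    intro L
    by_cases h : IsOpen (lastSet L) ∧ (lastSet L).Nonempty ∧ lastSet L ∩ Wset f ε = ∅
    · obtain ⟨V, y, z, hprops⟩ := step_lemma hf hKK hε (by positivity :
        (0:ℝ) < (1/2 : ℝ) ^ L.length) h.1 h.2.1 h.2.2 (L.map Prod.snd)
      exact ⟨V, y, z, fun _ => hprops⟩
    · exact ⟨V₀, Classical.arbitrary K, Classical.arbitrary K, fun hc => absurd hc h⟩
  choose Vf yf zf hVf using hstep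
  obtain ⟨σ, hσnil, hσcons⟩ : ∃ σ : BetaStrategy X, σ [] = V₀ ∧
      ∀ L : List (Set X × X), L ≠ [] → σ L = Vf L :=
    ⟨fun L => if L = [] then V₀ else Vf L, if_pos rfl, fun L hL => if_neg hL⟩
  -- the inductive invariant along legal plays
  have claim : ∀ (n : ℕ) (U : ℕ → Set X) (a : ℕ → X), AlphaLegal σ U a n →
      IsOpen (σ (hist (fun j => (U j, a j)) n)) ∧
      (σ (hist (fun j => (U j, a j)) n)).Nonempty ∧
      σ (hist (fun j => (U j, a j)) n) ⊆ V₀ ∧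
      ∀ m, n = m + 1 → σ (hist (fun j => (U j, a j)) n) ⊆ U m := by
    intro n
    induction n with
    | zero =>
      intro U a _
      rw [hist_zero, hσnil]
      exact ⟨hV₀o, hV₀ne, subset_rfl, fun m hm => by omega⟩
    | succ n ih =>
      intro U a h
      have hn := ih U a fun i hi => h i (Nat.lt_succ_of_lt hi)
      obtain ⟨hUo, hUne, hUsub⟩ := h n (Nat.lt_succ_self n)
      have hUV₀ : U n ⊆ V₀ := hUsub.trans hn.2.2.1
      have hUdis : U n ∩ Wset f ε = ∅ := by
        rw [← Set.subset_empty_iff]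
        intro x hx
        rw [← hV₀dis]
        exact ⟨hUV₀ hx.1, hx.2⟩
      have hls : lastSet (hist (fun j => (U j, a j)) (n + 1)) = U n := lastSet_hist _ n
      have hcond : IsOpen (lastSet (hist (fun j => (U j, a j)) (n + 1))) ∧
          (lastSet (hist (fun j => (U j, a j)) (n + 1))).Nonempty ∧
          lastSet (hist (fun j => (U j, a j)) (n + 1)) ∩ Wset f ε = ∅ := by
        rw [hls]; exact ⟨hUo, hUne, hUdis⟩
      have hprops := hVf _ hcond
      rw [hσcons _ (hist_ne_nil _ n)]
      have hsubU : Vf (hist (fun j => (U j, a j)) (n + 1)) ⊆ U n := by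
        have := hprops.2.2.1
        rwa [hls] at this
      refine ⟨hprops.1, hprops.2.1, hsubU.trans hUV₀, ?_⟩
      intro m hm
      have : m = n := by omega
      subst this
      exact hsubU
  refine hX ⟨σ, ⟨?_, ?_⟩⟩
  · intro U a n h
    obtain ⟨ho, hne, _, hsub⟩ := claim n U a h
    exact ⟨ho, hne, hsub⟩
  -- β wins: build a continuous function separating ⋂ Uₙ from the points aₙ
  intro U a hleg hw
  have hcond : ∀ n : ℕ,
      IsOpen (lastSet (hist (fun j => (U j, a j)) (n + 1))) ∧
      (lastSet (hist (fun j => (U j, a j)) (n + 1))).Nonempty ∧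
      lastSet (hist (fun j => (U j, a j)) (n + 1)) ∩ Wset f ε = ∅ := by
    intro n
    obtain ⟨hUo, hUne, hUsub⟩ := hleg (n + 1) n (Nat.lt_succ_self n)
    have hUV₀ : U n ⊆ V₀ := hUsub.trans (claim n U a (hleg n)).2.2.1
    rw [lastSet_hist]
    refine ⟨hUo, hUne, ?_⟩
    rw [← Set.subset_empty_iff]
    intro x hx
    rw [← hV₀dis]
    exact ⟨hUV₀ hx.1, hx.2⟩
  have hprops := fun n : ℕ => hVf (hist (fun j => (U j, a j)) (n + 1)) (hcond n)
  have hUsubV : ∀ n : ℕ,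
      U (n + 1) ⊆ Vf (hist (fun j => (U j, a j)) (n + 1)) := by
    intro n
    have h2 := (hleg (n + 2) (n + 1) (Nat.lt_succ_self _)).2.2
    rwa [hσcons _ (hist_ne_nil _ n)] at h2
  have hbig : ∀ (n : ℕ), ∀ x ∈ Vf (hist (fun j => (U j, a j)) (n + 1)),
      ε / 3 ≤ |f (x, yf (hist (fun j => (U j, a j)) (n + 1))) -
        f (x, zf (hist (fun j => (U j, a j)) (n + 1)))| :=
    fun n => (hprops n).2.2.2.1
  have hsmall : ∀ n i : ℕ, i ≤ n →
      |f (a i, yf (hist (fun j => (U j, a j)) (n + 1))) -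
        f (a i, zf (hist (fun j => (U j, a j)) (n + 1)))| ≤ (1/2 : ℝ) ^ (n + 1) := by
    intro n i hi
    have hmem : a i ∈ (hist (fun j => (U j, a j)) (n + 1)).map Prod.snd :=
      List.mem_map.mpr ⟨(U i, a i), mem_hist _ (Nat.lt_succ_of_le hi), rfl⟩
    have h3 := (hprops n).2.2.2.2 (a i) hmem
    rwa [length_hist] at h3
  -- the image of `K × K` in `C_p(X)` under the difference map
  have hΦcont : ∀ w : K × K, Continuous fun x => f (x, w.1) - f (x, w.2) :=
    fun w => (hf.2 w.1).sub (hf.2 w.2)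
  set Φ : K × K → {g : X → ℝ // Continuous g} :=
    fun w => ⟨fun x => f (x, w.1) - f (x, w.2), hΦcont w⟩ with hΦdef
  have hΦc : Continuous Φ :=
    Continuous.subtype_mk (continuous_pi fun x =>
      ((hf.1 x).comp continuous_fst).sub ((hf.1 x).comp continuous_snd)) _
  have pseudoY : Pseudocompact ↥(Set.range Φ) := by
    constructor
    · exact aux_t35 (fun v : ↥(Set.range Φ) => (v.1.1 : X → ℝ))
        (Topology.IsInducing.subtypeVal.comp Topology.IsInducing.subtypeVal)
        (Subtype.val_injective.comp Subtype.val_injective)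
    · intro gg hgg
      have hΦ' : Continuous fun w : K × K =>
          (⟨Φ w, Set.mem_range_self w⟩ : ↥(Set.range Φ)) := hΦc.subtype_mk _
      obtain ⟨Mb, hMb⟩ := hKK.2 (fun w => gg ⟨Φ w, Set.mem_range_self w⟩) (hgg.comp hΦ')
      refine ⟨Mb, fun v _ => ?_⟩
      obtain ⟨w, hwv⟩ := v.2
      have hv : (⟨Φ w, Set.mem_range_self w⟩ : ↥(Set.range Φ)) = v := Subtype.ext hwv
      rw [← hv]
      exact hMb w trivial
  obtain ⟨gz, hgz⟩ := hcc (Set.range Φ) pseudoY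
    (fun n => Φ (yf (hist (fun j => (U j, a j)) (n + 1)),
      zf (hist (fun j => (U j, a j)) (n + 1))))
    (fun n => Set.mem_range_self _)
  have heval : ∀ x : X, MapClusterPt (gz.1 x) atTop
      (fun n => f (x, yf (hist (fun j => (U j, a j)) (n + 1))) -
        f (x, zf (hist (fun j => (U j, a j)) (n + 1)))) := by
    intro x
    have hcont : ContinuousAt (fun v : {g : X → ℝ // Continuous g} => v.1 x) gz :=
      ((continuous_apply x).comp continuous_subtype_val).continuousAt
    exact hgz.continuousAt_comp hcont
  have hzero : ∀ i, gz.1 (a i) = 0 := by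
    intro i
    have htend : Tendsto (fun n => f (a i, yf (hist (fun j => (U j, a j)) (n + 1))) -
        f (a i, zf (hist (fun j => (U j, a j)) (n + 1)))) atTop (𝓝 0) := by
      apply squeeze_zero_norm' (a := fun n => (1/2 : ℝ) ^ (n + 1))
      · filter_upwards [Filter.eventually_ge_atTop i] with n hn
        rw [Real.norm_eq_abs]
        exact hsmall n i hn
      · exact (tendsto_pow_atTop_nhds_zero_of_lt_one (by norm_num) (by norm_num)).comp
          (tendsto_add_atTop_nat 1)
    exact eq_of_nhds_neBot ((heval (a i)).clusterPt.mono htend)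
  have hbigt : ∀ t ∈ ⋂ n, U n, ε / 3 ≤ |gz.1 t| := by
    intro t ht
    have hmem : ∀ n : ℕ, f (t, yf (hist (fun j => (U j, a j)) (n + 1))) -
        f (t, zf (hist (fun j => (U j, a j)) (n + 1))) ∈ {r : ℝ | ε / 3 ≤ |r|} :=
      fun n => hbig n t (hUsubV n (Set.mem_iInter.mp ht (n + 1)))
    have hclosed : IsClosed {r : ℝ | ε / 3 ≤ |r|} :=
      isClosed_le continuous_const continuous_abs
    have hmc : gz.1 t ∈ closure {r : ℝ | ε / 3 ≤ |r|} := by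
      refine mem_closure_iff_clusterPt.mpr ((heval t).clusterPt.mono ?_)
      rw [le_principal_iff]
      exact Filter.mem_map.mpr (Filter.Eventually.of_forall hmem)
    rwa [hclosed.closure_eq] at hmc
  obtain ⟨t, ht, hcl⟩ := hw gz.1 gz.2
  have hrange : (Set.range fun n => gz.1 (a n)) ⊆ {(0:ℝ)} := by
    rintro _ ⟨n, rfl⟩
    exact hzero n
  have h0 : gz.1 t ∈ ({(0:ℝ)} : Set ℝ) := by
    have hsub := closure_mono hrange
    rw [isClosed_singleton.closure_eq] at hsub
    exact hsub hcl
  rw [Set.mem_singleton_iff] at h0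
  have h1 := hbigt t ht
  rw [h0, abs_zero] at h1
  linarith

end AuxProof

open SepJoint in
/-- Corollary 3.3 (2): `X` σ_{C(X)}-β-defavorable, `K × K` pseudocompact, and
every pseudocompact subspace of `C_p(X)` relatively countably compact in `C_p(X)`; then `f`
is jointly continuous at each point of `R × K` for some dense Gδ set `R ⊆ X`. -/
theorem denseGdelta_joint_continuity_of_square_pseudocompact
    {X K : Type*} [TopologicalSpace X] [TopologicalSpace K]
    (hX : SigmaGammaBetaDefavorable X {g : X → ℝ | Continuous g})
    (hKK : Pseudocompact (K × K))
    (hcc : ∀ Y : Set {g : X → ℝ // Continuous g}, Pseudocompact Y → RelCountablyCompact Y)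
    (f : X × K → ℝ) (hf : SeparatelyContinuous f) :
    ∃ R : Set X, Dense R ∧ IsGδ R ∧ ∀ x ∈ R, ∀ y : K, ContinuousAt f (x, y) := by
  classical
  haveI : BaireSpace X := baire_aux hX
  refine ⟨⋂ n : ℕ, Wset f (1 / ((n : ℝ) + 1)), ?_, ?_, ?_⟩
  · exact dense_iInter_of_isOpen (fun n => Wset_isOpen f _)
      (fun n => Wset_dense hX hKK hcc hf (by positivity))
  · exact IsGδ.iInter_of_isOpen fun n => Wset_isOpen f _
  · intro x hx yy
    rw [ContinuousAt, Metric.tendsto_nhds]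
    intro ε hε
    obtain ⟨n, hn⟩ := exists_nat_one_div_lt (half_pos hε)
    obtain ⟨U, hUo, hxU, hU⟩ := Set.mem_iInter.mp hx n
    have hWyo : IsOpen ((fun y' => f (x, y')) ⁻¹' Metric.ball (f (x, yy)) (ε / 2)) :=
      Metric.isOpen_ball.preimage (hf.1 x)
    have hyy : yy ∈ (fun y' => f (x, y')) ⁻¹' Metric.ball (f (x, yy)) (ε / 2) := by
      simp [Metric.mem_ball, half_pos hε]
    filter_upwards [prod_mem_nhds (hUo.mem_nhds hxU) (hWyo.mem_nhds hyy)] with q hq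
    obtain ⟨hq1, hq2⟩ := hq
    have h1 : |f (q.1, q.2) - f (x, q.2)| ≤ 1 / ((n : ℝ) + 1) := hU q.1 hq1 x hxU q.2
    have h2 : |f (x, q.2) - f (x, yy)| < ε / 2 := by
      have h2' := hq2
      rw [Set.mem_preimage, Metric.mem_ball, Real.dist_eq] at h2'
      exact h2'
    have h3 := abs_sub_le (f (q.1, q.2)) (f (x, q.2)) (f (x, yy))
    rw [Real.dist_eq]
    have hfq : f q = f (q.1, q.2) := rfl
    rw [hfq]
    linarith
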